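/- Suppose (i) for every action a, element x, and aspect set β, if x ∉ β and a has aspect β, then for all situations s, t, R_x(s,t) ↔ R_x(a(s),t); and (ii) for every fluent p and aspect set α, if p has aspect α then there exists a family of predicates q_x on situations such that for all s, p(s) ↔ ∀x ∈ α, ∃t (q_x(t) ∧ R_x(s,t)). Then for every fluent p, action a, and aspect sets α, β with α ∩ β = ∅, if p has aspect α and a has aspect β, the frame axiom F[a,p] holds, i.e., for all s, p(s) ↔ p(a(s)). -/
import Mathlib

/-- Collective relational formalism (existential version): the frame axiom
holds for fluents and actions with disjoint aspect sets. -/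
theorem collective_relational_existential_noninterference
    {S 𝒜 : Type*} (R : 𝒜 → S → S → Prop)
    (fluentAspect : (S → Prop) → Set 𝒜 → Prop)
    (actionAspect : (S → S) → Set 𝒜 → Prop)
    (h1 : ∀ (a : S → S) (x : 𝒜) (β : Set 𝒜), x ∉ β → actionAspect a β →
      ∀ s t : S, R x s t ↔ R x (a s) t)
    (h2 : ∀ (p : S → Prop) (α : Set 𝒜), fluentAspect p α →
      ∃ q : 𝒜 → S → Prop, ∀ s : S,
        p s ↔ ∀ x ∈ α, ∃ t : S, q x t ∧ R x s t) :
    ∀ (p : S → Prop) (a : S → S) (α β : Set 𝒜), α ∩ β = ∅ →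
      fluentAspect p α → actionAspect a β →
      ∀ s : S, p s ↔ p (a s) := by
  intro p a α β hdisj hp ha s
  obtain ⟨q, hq⟩ := h2 p α hp
  have hx : ∀ x ∈ α, x ∉ β := by
    intro x hx hxb
    exact absurd (Set.mem_inter hx hxb) (by simp [hdisj])
  rw [hq s, hq (a s)]
  constructor
  · intro h x hxa
    obtain ⟨t, ht, hr⟩ := h x hxa
    exact ⟨t, ht, (h1 a x β (hx x hxa) ha s t).mp hr⟩
  · intro h x hxa
    obtain ⟨t, ht, hr⟩ := h x hxa
    exact ⟨t, ht, (h1 a x β (hx x hxa) ha s t).mpr hr⟩
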